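/- arXiv:2210.09939 — 10 statements merged into one kernel-verified Lean document; each statement's English description precedes it below -/
import Mathlib

section
/- Let f, g : S → ℂ satisfy f(xy) + μ(y)f(σ(y)x) = 2f(x)g(y) for all x, y ∈ S, and for a ∈ S define f_a(x) := f(ax) − f(a)g(x). If there exists a ∈ S with f_a ≠ 0, then g is abelian and f_a is abelian for every a ∈ S; in particular g and each f_a are central. -/
/-- If (f, g) solves the μ-σ-Wilson equation and f_a ≠ 0 for some a,
then g is abelian and every f_a is abelian (in particular central). -/
theorem stmt_1 {S : Type*} [Semigroup S] (σ : S → S) (hσbij : Function.Bijective σ)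
    (hσ : ∀ x y : S, σ (x * y) = σ x * σ y)
    (μ : S → ℂ) (hμ : ∀ x y : S, μ (x * y) = μ x * μ y)
    (hμσ : ∀ x : S, μ (x * σ x) = 1)
    (f g : S → ℂ)
    (hfg : ∀ x y : S, f (x * y) + μ y * f (σ y * x) = 2 * f x * g y)
    (hne : ∃ a : S, (fun x => f (a * x) - f a * g x) ≠ 0) :
    ((∀ x y : S, g (x * y) = g (y * x)) ∧
      (∀ x y z : S, g (x * (y * z)) = g (x * (z * y)))) ∧
    (∀ a : S,
      (∀ x y : S, (f (a * (x * y)) - f a * g (x * y)) =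
        (f (a * (y * x)) - f a * g (y * x))) ∧
      (∀ x y z : S, (f (a * (x * (y * z))) - f a * g (x * (y * z))) =
        (f (a * (x * (z * y))) - f a * g (x * (z * y))))) := by
  -- The sine addition law for every f_a
  have sine : ∀ a x y : S, f (a * (x * y)) - f a * g (x * y) =
      (f (a * x) - f a * g x) * g y + (f (a * y) - f a * g y) * g x := by
    intro a x y
    have E1 := hfg (a * x) y
    have E2 := hfg a (x * y)
    have E3 := hfg (σ y * a) x
    have E4 := hfg a y
    simp only [hσ, hμ, mul_assoc] at E1 E2 E3 E4 ⊢
    linear_combination (E1 + E2 - μ y * E3 - 2 * g x * E4) / 2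
  -- centrality of every f_a (the sine law has symmetric right-hand side)
  have hcent : ∀ a x y : S, f (a * (x * y)) - f a * g (x * y) =
      f (a * (y * x)) - f a * g (y * x) := by
    intro a x y
    linear_combination sine a x y - sine a y x
  obtain ⟨a₀, ha₀⟩ := hne
  obtain ⟨z₀, hz₀⟩ := Function.ne_iff.mp ha₀
  simp only [Pi.zero_apply] at hz₀
  -- star: h x * φ(y,z) = h z * φ(x,y) where h = f_{a₀}, φ(x,y) = g(xy) - g x g y
  have star : ∀ x y z : S,
      (f (a₀ * x) - f a₀ * g x) * (g (y * z) - g y * g z) =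
      (f (a₀ * z) - f a₀ * g z) * (g (x * y) - g x * g y) := by
    intro x y z
    have e1 := sine a₀ (x * y) z
    have e2 := sine a₀ x (y * z)
    have e3 := sine a₀ x y
    have e4 := sine a₀ y z
    rw [mul_assoc x y z] at e1
    linear_combination e1 - e2 + g z * e3 - g x * e4
  -- key: φ(x,y) * h z₀ ^ 2 = φ(z₀,z₀) * h x * h y
  have key : ∀ x y : S,
      (g (x * y) - g x * g y) *
        ((f (a₀ * z₀) - f a₀ * g z₀) * (f (a₀ * z₀) - f a₀ * g z₀)) =
      (g (z₀ * z₀) - g z₀ * g z₀) *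
        ((f (a₀ * x) - f a₀ * g x) * (f (a₀ * y) - f a₀ * g y)) := by
    intro x y
    have s1 := star x y z₀
    have s2 := star y z₀ z₀
    linear_combination (-(f (a₀ * z₀) - f a₀ * g z₀)) * s1
      - (f (a₀ * x) - f a₀ * g x) * s2
  have hQ : (f (a₀ * z₀) - f a₀ * g z₀) * (f (a₀ * z₀) - f a₀ * g z₀) ≠ 0 :=
    mul_ne_zero hz₀ hz₀
  -- g is central
  have gcomm : ∀ x y : S, g (x * y) = g (y * x) := by
    intro x y
    have t : (g (x * y) - g (y * x)) *
        ((f (a₀ * z₀) - f a₀ * g z₀) * (f (a₀ * z₀) - f a₀ * g z₀)) = 0 := by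
      linear_combination key x y - key y x
    rcases mul_eq_zero.mp t with h | h
    · exact sub_eq_zero.mp h
    · exact absurd h hQ
  -- g is abelian
  have gab : ∀ x y z : S, g (x * (y * z)) = g (x * (z * y)) := by
    intro x y z
    have t : (g (x * (y * z)) - g (x * (z * y))) *
        ((f (a₀ * z₀) - f a₀ * g z₀) * (f (a₀ * z₀) - f a₀ * g z₀)) = 0 := by
      linear_combination key x (y * z) - key x (z * y)
        + (g (z₀ * z₀) - g z₀ * g z₀) * (f (a₀ * x) - f a₀ * g x) * hcent a₀ y z
        + g x * ((f (a₀ * z₀) - f a₀ * g z₀) * (f (a₀ * z₀) - f a₀ * g z₀)) * gcomm y z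
    rcases mul_eq_zero.mp t with h | h
    · exact sub_eq_zero.mp h
    · exact absurd h hQ
  refine ⟨⟨gcomm, gab⟩, fun a => ⟨hcent a, fun x y z => ?_⟩⟩
  linear_combination sine a x (y * z) - sine a x (z * y)
    + (f (a * x) - f a * g x) * gcomm y z + g x * hcent a y z
end

section
/- Let f, g : S → ℂ satisfy f(xy) + μ(y)f(σ(y)x) = 2f(x)g(y) for all x, y ∈ S. Then f°(xy) = f(x)g(y) − f*(y)g(x) for all x, y ∈ S. -/
/-- f°(xy) = f(x)g(y) − f*(y)g(x), where f*(x) = μ(x)f(σ(x)) and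
f° = (f − f*)/2. -/
theorem stmt_2 {S : Type*} [Semigroup S] (σ : S → S) (hσbij : Function.Bijective σ)
    (hσ : ∀ x y : S, σ (x * y) = σ x * σ y)
    (μ : S → ℂ) (hμ : ∀ x y : S, μ (x * y) = μ x * μ y)
    (hμσ : ∀ x : S, μ (x * σ x) = 1)
    (f g : S → ℂ)
    (hfg : ∀ x y : S, f (x * y) + μ y * f (σ y * x) = 2 * f x * g y) :
    ∀ x y : S,
      (f (x * y) - μ (x * y) * f (σ (x * y))) / 2 =
        f x * g y - (μ y * f (σ y)) * g x := by
  intro x y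
  have A := hfg (σ y) x
  have B := hfg x y
  rw [hμ x y, hσ x y]
  linear_combination (B - μ y * A) / 2
end

section
/- Let f, g : S → ℂ satisfy f(xy) + μ(y)f(σ(y)x) = 2f(x)g(y) for all x, y ∈ S. Then f(xy) = 2f(x)g(y) + 2f(y)g(x) − 4f^e(y)g(x) + f*(xy) for all x, y ∈ S. -/
/-- f(xy) = 2f(x)g(y) + 2f(y)g(x) − 4f^e(y)g(x) + f*(xy), where
f*(x) = μ(x)f(σ(x)) and f^e = (f + f*)/2. -/
theorem stmt_3 {S : Type*} [Semigroup S] (σ : S → S) (hσbij : Function.Bijective σ)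
    (hσ : ∀ x y : S, σ (x * y) = σ x * σ y)
    (μ : S → ℂ) (hμ : ∀ x y : S, μ (x * y) = μ x * μ y)
    (hμσ : ∀ x : S, μ (x * σ x) = 1)
    (f g : S → ℂ)
    (hfg : ∀ x y : S, f (x * y) + μ y * f (σ y * x) = 2 * f x * g y) :
    ∀ x y : S,
      f (x * y) =
        2 * f x * g y + 2 * f y * g x -
          4 * ((f y + μ y * f (σ y)) / 2) * g x +
          μ (x * y) * f (σ (x * y)) := by
  intro x y
  rw [hσ, hμ]
  linear_combination hfg x y - μ y * hfg (σ y) x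
end

section
/- Let f, g : S → ℂ satisfy f(xy) + μ(y)f(σ(y)x) = 2f(x)g(y) for all x, y ∈ S. If f is central and g ≠ 0, then there exists a constant c ∈ ℂ such that f^e = c·g; in particular f^e and g are linearly dependent. -/
/-- If f is central and g ≠ 0, then f^e = c·g for some constant c. -/
theorem stmt_4 {S : Type*} [Semigroup S] (σ : S → S) (hσbij : Function.Bijective σ)
    (hσ : ∀ x y : S, σ (x * y) = σ x * σ y)
    (μ : S → ℂ) (hμ : ∀ x y : S, μ (x * y) = μ x * μ y)
    (hμσ : ∀ x : S, μ (x * σ x) = 1)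
    (f g : S → ℂ)
    (hfg : ∀ x y : S, f (x * y) + μ y * f (σ y * x) = 2 * f x * g y)
    (hcentral : ∀ x y : S, f (x * y) = f (y * x))
    (hg : g ≠ 0) :
    ∃ c : ℂ, ∀ x : S, (f x + μ x * f (σ x)) / 2 = c * g x := by
  have key : ∀ x y : S, (f y + μ y * f (σ y)) * g x = (f x + μ x * f (σ x)) * g y := by
    intro x y
    linear_combination (μ x * (hfg (σ x) y) - hfg y x - μ y * (hfg (σ y) x) + hfg x y) / 2
      + (hcentral y x) / 2 - (μ x * μ y / 2) * (hcentral (σ y) (σ x))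
  obtain ⟨y₀, hy₀⟩ : ∃ y₀, g y₀ ≠ 0 := by
    by_contra h
    push_neg at h
    exact hg (funext fun x => h x)
  refine ⟨(f y₀ + μ y₀ * f (σ y₀)) / (2 * g y₀), fun x => ?_⟩
  have := key x y₀
  field_simp
  ring_nf

  linear_combination (-1 : ℂ) * this
end

section
/- Let f, g : S → ℂ satisfy f(xy) + μ(y)f(σ(y)x) = 2f(x)g(y) for all x, y ∈ S. If f^e and g are linearly independent (as elements of the ℂ-vector space of functions S → ℂ) and g ≠ 0, then there exist functions h₁, h₂ : S → ℂ such that g(xy) = f(x)h₁(y) + g(x)h₂(y) for all x, y ∈ S. -/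
/-- If f^e and g are linearly independent and g ≠ 0, then
g(xy) = f(x)h₁(y) + g(x)h₂(y) for some functions h₁, h₂. -/
theorem stmt_5 {S : Type*} [Semigroup S] (σ : S → S) (hσbij : Function.Bijective σ)
    (hσ : ∀ x y : S, σ (x * y) = σ x * σ y)
    (μ : S → ℂ) (hμ : ∀ x y : S, μ (x * y) = μ x * μ y)
    (hμσ : ∀ x : S, μ (x * σ x) = 1)
    (f g : S → ℂ)
    (hfg : ∀ x y : S, f (x * y) + μ y * f (σ y * x) = 2 * f x * g y)
    (hindep : LinearIndependent ℂ ![fun x : S => (f x + μ x * f (σ x)) / 2, g])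
    (hg : g ≠ 0) :
    ∃ h₁ h₂ : S → ℂ, ∀ x y : S, g (x * y) = f x * h₁ y + g x * h₂ y := by
  -- Key identity I2 : f*(zx) + μ(x) f(σ(x)z) = 2 g(z) f*(x), where f*(w) = μ(w) f(σ(w))
  have I2 : ∀ z x : S, μ (z * x) * f (σ (z * x)) + μ x * f (σ x * z)
      = 2 * g z * (μ x * f (σ x)) := by
    intro z x
    have h1 := hfg (σ x) z
    rw [← hσ z x] at h1
    linear_combination μ x * h1 + f (σ (z * x)) * hμ z x
  -- I3 : (f - f*)(zx) = 2 f(z) g(x) - 2 g(z) f*(x)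
  have I3 : ∀ a b : S, f (a * b) - μ (a * b) * f (σ (a * b))
      = 2 * f a * g b - 2 * g a * (μ b * f (σ b)) := by
    intro a b
    linear_combination hfg a b - I2 a b
  -- Key identity H from associativity
  have H : ∀ z x y : S,
      f (z * x) * g y - g (z * x) * (μ y * f (σ y)) =
      f z * g (x * y) - g z * (μ (x * y) * f (σ (x * y))) := by
    intro z x y
    have h1 := I3 (z * x) y
    have h2 := I3 z (x * y)
    rw [mul_assoc] at h1
    linear_combination (h2 - h1) / 2
  by_cases hdep : ∃ l : ℂ, ∀ x : S, μ x * f (σ x) = l * g x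
  · obtain ⟨l, hl⟩ := hdep
    -- φ := f - l • g is nonzero, else f^e = l • g contradicting independence
    have hphi : ∃ z₀ : S, f z₀ - l * g z₀ ≠ 0 := by
      by_contra hc
      push_neg at hc
      have h0 : (1 : ℂ) • (fun x : S => (f x + μ x * f (σ x)) / 2) + (-l) • g = 0 := by
        funext z
        have h1 := hc z
        have h2 := hl z
        simp only [Pi.add_apply, Pi.smul_apply, smul_eq_mul, Pi.zero_apply]
        have h3 : f z = l * g z := by linear_combination h1
        rw [h3, h2]
        ring
      have := (LinearIndependent.pair_iff.mp hindep 1 (-l) h0).1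
      exact one_ne_zero this
    obtain ⟨z₀, hz₀⟩ := hphi
    -- P : φ(zx) = 2 φ(z) g(x)
    have P : ∀ z x : S, f (z * x) - l * g (z * x) = 2 * (f z - l * g z) * g x := by
      intro z x
      have h1 := I3 z x
      have h2 := hl (z * x)
      have h3 := hl x
      linear_combination h1 + h2 - 2 * g z * h3
    refine ⟨fun _ => 0, fun y => 2 * g y, ?_⟩
    intro x y
    have q1 := P z₀ (x * y)
    have q2 := P (z₀ * x) y
    have q3 := P z₀ x
    rw [← mul_assoc] at q1
    have hne : (2 : ℂ) * (f z₀ - l * g z₀) ≠ 0 := by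
      exact mul_ne_zero two_ne_zero hz₀
    have key : g (x * y) = 2 * g x * g y := by
      apply mul_left_cancel₀ hne
      linear_combination q2 + 2 * g y * q3 - q1
    rw [key]; ring
  · -- f* and g are linearly independent; find witnesses
    push_neg at hdep
    have ⟨a, ha⟩ : ∃ a : S, g a ≠ 0 := by
      by_contra hc
      push_neg at hc
      exact hg (funext hc)
    obtain ⟨b, hb⟩ := hdep (μ a * f (σ a) / g a)
    have hD : μ b * f (σ b) * g a - μ a * f (σ a) * g b ≠ 0 := by
      intro h
      apply hb
      field_simp
      linear_combination h
    refine ⟨fun y => (g (y * a) * g b - g (y * b) * g a) /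
        (μ b * f (σ b) * g a - μ a * f (σ a) * g b),
      fun y => (μ (y * b) * f (σ (y * b)) * g a - μ (y * a) * f (σ (y * a)) * g b) /
        (μ b * f (σ b) * g a - μ a * f (σ a) * g b), ?_⟩
    intro x y
    have e1 := H x y b
    have e2 := H x y a
    rw [mul_div_assoc', mul_div_assoc', ← add_div, eq_div_iff hD]
    linear_combination g b * e2 - g a * e1
end

section
/- Let f, g : S → ℂ satisfy f(xy) + μ(y)f(σ(y)x) = 2f(x)g(y) for all x, y ∈ S. If g is a non-zero multiplicative function, then there exists a function h : S → ℂ such that f(xy) = f(x)g(y) + g(x)h(y) for all x, y ∈ S. -/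
/-- If g is a non-zero multiplicative function, then
f(xy) = f(x)g(y) + g(x)h(y) for some function h. -/
theorem stmt_6 {S : Type*} [Semigroup S] (σ : S → S) (hσbij : Function.Bijective σ)
    (hσ : ∀ x y : S, σ (x * y) = σ x * σ y)
    (μ : S → ℂ) (hμ : ∀ x y : S, μ (x * y) = μ x * μ y)
    (hμσ : ∀ x : S, μ (x * σ x) = 1)
    (f g : S → ℂ)
    (hfg : ∀ x y : S, f (x * y) + μ y * f (σ y * x) = 2 * f x * g y)
    (hgmul : ∀ x y : S, g (x * y) = g x * g y)
    (hg : g ≠ 0) :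
    ∃ h : S → ℂ, ∀ x y : S, f (x * y) = f x * g y + g x * h y := by
  -- Key lemma A : f(xyz) = f(xy)g(z) + f(xz)g(y) - f(x)g(y)g(z)
  have lemA : ∀ x y z : S,
      f (x * y * z) = f (x * y) * g z + f (x * z) * g y - f x * g y * g z := by
    intro x y z
    have e1 := hfg (x * y) z
    rw [← mul_assoc] at e1
    have e2 := hfg (σ z * x) y
    rw [← mul_assoc, ← hσ] at e2
    have e3 := hfg x (y * z)
    rw [← mul_assoc, hμ, hgmul] at e3
    have e4 := hfg x z
    linear_combination (e1 - μ z * e2 + e3) / 2 - g y * e4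
  -- Key lemma C : g(y)(f(xz) - f(x)g(z)) = μ(y)g(x)(f(σ(y)z) - f(σ(y))g(z))
  have lemC : ∀ x y z : S,
      g y * (f (x * z) - f x * g z) = μ y * g x * (f (σ y * z) - f (σ y) * g z) := by
    intro x y z
    have s1 := hfg (x * z) y
    rw [← mul_assoc] at s1
    have A1 := lemA x z y
    have A2 := lemA (σ y) x z
    have s2 := hfg x y
    linear_combination (-1 : ℂ) * s1 + A1 + μ y * A2 + g z * s2
  -- Pick y₀ with g y₀ ≠ 0
  obtain ⟨y0, hy0⟩ : ∃ y0, g y0 ≠ 0 := by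
    by_contra h
    push_neg at h
    exact hg (funext fun x => h x)
  refine ⟨fun z => μ y0 / g y0 * (f (σ y0 * z) - f (σ y0) * g z), fun x y => ?_⟩
  have key := lemC x y0 y
  have key2 : f (x * y) - f x * g y
      = μ y0 * g x * (f (σ y0 * y) - f (σ y0) * g y) / g y0 := by
    rw [eq_div_iff hy0]
    linear_combination key
  linear_combination key2
end

section
/- Let f, g : S → ℂ satisfy f(xy) + μ(y)f(σ(y)x) = 2f(x)g(y) for all x, y ∈ S, and suppose there is a constant c ∈ ℂ with f^e = c·g. Then the pair (f°, g) satisfies the sine addition law: f°(xy) = f°(x)g(y) + f°(y)g(x) for all x, y ∈ S. -/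
/-- If f^e = c·g for a constant c, then (f°, g) satisfies the
sine addition law: f°(xy) = f°(x)g(y) + f°(y)g(x). -/
theorem stmt_12 {S : Type*} [Semigroup S] (σ : S → S) (hσbij : Function.Bijective σ)
    (hσ : ∀ x y : S, σ (x * y) = σ x * σ y)
    (μ : S → ℂ) (hμ : ∀ x y : S, μ (x * y) = μ x * μ y)
    (hμσ : ∀ x : S, μ (x * σ x) = 1)
    (f g : S → ℂ)
    (hfg : ∀ x y : S, f (x * y) + μ y * f (σ y * x) = 2 * f x * g y)
    (c : ℂ) (hc : ∀ x : S, (f x + μ x * f (σ x)) / 2 = c * g x) :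
    ∀ x y : S,
      (f (x * y) - μ (x * y) * f (σ (x * y))) / 2 =
        ((f x - μ x * f (σ x)) / 2) * g y +
          ((f y - μ y * f (σ y)) / 2) * g x := by
  intro x y
  have h1 := hfg x y
  have h2 := hfg (σ y) x
  rw [hσ x y, hμ x y]
  linear_combination (1/2) * h1 - (μ y / 2) * h2 + (g y) * (hc x) - (g x) * (hc y)
end

section
/- Let f, g : S → ℂ satisfy f(xy) + μ(y)f(σ(y)x) = 2f(x)g(y) for all x, y ∈ S, with f ≠ 0 and g ≠ 0. Then f^e and g are linearly dependent, i.e. there exists c ∈ ℂ with f^e = c·g. -/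
/-- If (f, g) solves the μ-σ-Wilson equation with f ≠ 0 and g ≠ 0, then
f^e and g are linearly dependent: f^e = c·g for some c ∈ ℂ. -/
theorem stmt_13 {S : Type*} [Semigroup S] (σ : S → S) (hσbij : Function.Bijective σ)
    (hσ : ∀ x y : S, σ (x * y) = σ x * σ y)
    (μ : S → ℂ) (hμ : ∀ x y : S, μ (x * y) = μ x * μ y)
    (hμσ : ∀ x : S, μ (x * σ x) = 1)
    (f g : S → ℂ)
    (hfg : ∀ x y : S, f (x * y) + μ y * f (σ y * x) = 2 * f x * g y)
    (hf : f ≠ 0) (hg : g ≠ 0) :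
    ∃ c : ℂ, ∀ x : S, (f x + μ x * f (σ x)) / 2 = c * g x := by
  -- basic nonvanishing points
  obtain ⟨x0, hx0⟩ : ∃ x, f x ≠ 0 := by
    by_contra h; push_neg at h; exact hf (funext fun x => h x)
  obtain ⟨z0, hz0⟩ : ∃ x, g x ≠ 0 := by
    by_contra h; push_neg at h; exact hg (funext fun x => h x)
  have hμ0 : ∀ t : S, μ t ≠ 0 := by
    intro t
    have h1 : μ t * μ (σ t) = 1 := by rw [← hμ]; exact hμσ t
    exact left_ne_zero_of_mul_eq_one h1
  -- the fundamental triple-product expansion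
  have hstar : ∀ x y z : S, f (x * y * z) =
      f (x * y) * g z + f x * g (y * z) + f (x * z) * g y - 2 * f x * g y * g z := by
    intro x y z
    have E1 := hfg (x * y) z
    rw [show σ z * (x * y) = σ z * x * y from (mul_assoc (σ z) x y).symm] at E1
    have E2 := hfg (σ z * x) y
    rw [show σ y * (σ z * x) = σ (y * z) * x from by rw [hσ, mul_assoc]] at E2
    have E3 := hfg x (y * z)
    rw [show x * (y * z) = x * y * z from (mul_assoc x y z).symm, hμ y z] at E3
    have E4 := hfg x z
    linear_combination (E1 - μ z * E2 + E3 - 2 * g y * E4) / 2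
  -- quadruple-product consequence
  have hLP : ∀ x y z w : S, f (x * y) * (g (z * w) - g z * g w)
      - f (x * w) * (g (y * z) - g y * g z)
      = f x * (g y * g (z * w) - g (y * z) * g w) := by
    intro x y z w
    have A1 := hstar x y (z * w)
    have A2 := hstar x z w
    have B1 := hstar x (y * z) w
    have B2 := hstar x y z
    rw [mul_assoc x z w] at A2
    rw [mul_assoc x y z] at B2
    rw [mul_assoc y z w] at B1
    have e : x * y * (z * w) = x * (y * z) * w := by rw [← mul_assoc, mul_assoc x y z]
    rw [e] at A1
    linear_combination -A1 - g y * A2 + B1 + g w * B2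
  have hR : ∀ x y z : S, f (x * y) * (g (z * y) - g (y * z))
      = f x * g y * (g (z * y) - g (y * z)) := by
    intro x y z
    linear_combination hLP x y z y
  -- centrality of g
  have hcen : ∀ u v : S, g (u * v) = g (v * u) := by
    by_contra hc
    push_neg at hc
    obtain ⟨a0, b0, hne⟩ := hc
    have hd : g (b0 * a0) - g (a0 * b0) ≠ 0 := sub_ne_zero.mpr (Ne.symm hne)
    have Ea : ∀ x, f (x * a0) = f x * g a0 := by
      intro x
      exact mul_right_cancel₀ hd (hR x a0 b0)
    have Eb : ∀ x, μ a0 * f (σ a0 * x) = f x * g a0 := by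
      intro x
      linear_combination hfg x a0 - Ea x
    have T1 : ∀ y x, μ a0 * f (σ y * (σ a0 * x)) = g a0 * f (σ y * x) := by
      intro y x
      have E5 := hfg (σ a0 * x) y
      rw [mul_assoc (σ a0) x y] at E5
      have key : μ y * (μ a0 * f (σ y * (σ a0 * x)) - g a0 * f (σ y * x)) = 0 := by
        linear_combination μ a0 * E5 - Eb (x * y) + 2 * g y * Eb x - g a0 * hfg x y
      have h6 := (mul_eq_zero.mp key).resolve_left (hμ0 y)
      exact sub_eq_zero.mp h6
    have C1 : ∀ z, g (a0 * z) = g a0 * g z := by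
      intro z
      have E6 := hfg x0 (a0 * z)
      rw [show x0 * (a0 * z) = x0 * a0 * z from (mul_assoc x0 a0 z).symm, hμ a0 z,
        show σ (a0 * z) * x0 = σ a0 * (σ z * x0) from by rw [hσ, mul_assoc]] at E6
      have key : f x0 * (g (a0 * z) - g a0 * g z) = 0 := by
        linear_combination -E6 + μ z * Eb (σ z * x0) + hstar x0 a0 z + g z * Ea x0
          + g a0 * hfg x0 z
      have h9 := (mul_eq_zero.mp key).resolve_left hx0
      exact sub_eq_zero.mp h9
    have C2 : ∀ z, g (z * a0) = g a0 * g z := by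
      intro z
      have E7 := hfg x0 (z * a0)
      rw [show x0 * (z * a0) = x0 * z * a0 from (mul_assoc x0 z a0).symm, hμ z a0,
        show σ (z * a0) * x0 = σ z * (σ a0 * x0) from by rw [hσ, mul_assoc]] at E7
      have key : f x0 * (g (z * a0) - g a0 * g z) = 0 := by
        linear_combination (-E7 + Ea (x0 * z) + μ z * T1 z x0 + g a0 * hfg x0 z) / 2
      have h9 := (mul_eq_zero.mp key).resolve_left hx0
      exact sub_eq_zero.mp h9
    exact hne ((C1 b0).trans (C2 b0).symm)
  -- the μσ-transformed values on products
  have hI2 : ∀ u v : S, μ (u * v) * f (σ (u * v)) =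
      f (u * v) + 2 * (μ v * f (σ v)) * g u - 2 * f u * g v := by
    intro u v
    have E8 := hfg (σ v) u
    rw [show σ u * σ v = σ (u * v) from (hσ u v).symm] at E8
    have E9 := hfg u v
    linear_combination μ v * E8 - E9 + f (σ (u * v)) * hμ u v
  have hF : ∀ x y z : S, f (x * y) * g z + μ (y * z) * f (σ (y * z)) * g x =
      f x * g (y * z) + μ z * f (σ z) * g (x * y) := by
    intro x y z
    have J1 := hI2 (x * y) z
    rw [mul_assoc x y z] at J1
    have J2 := hI2 x (y * z)
    linear_combination (J1 - J2) / 2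
  -- U : Ψ(x,y) * W(x,y) = 0
  have hU : ∀ x y : S, (2 * g x * g y - g (x * y)) *
      ((f x + μ x * f (σ x)) * g y - (f y + μ y * f (σ y)) * g x) = 0 := by
    intro x y
    linear_combination g x * g y * hI2 x y - g x * g y * hI2 y x + g y * hF x y x
      - g x * hF y x y - f x * g y * hcen x y + μ y * f (σ y) * g x * hcen x y
  -- the cross-symmetry identity : W(x,y)Ψ(z,w) = W(z,w)Ψ(x,y)
  have hGOAL : ∀ x y z w : S, (2 * g x * g y - g (x * y)) *
      ((f z + μ z * f (σ z)) * g w - (f w + μ w * f (σ w)) * g z) =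
      (2 * g z * g w - g (z * w)) *
      ((f x + μ x * f (σ x)) * g y - (f y + μ y * f (σ y)) * g x) := by
    intro x y z w
    linear_combination
      - g y * g w * hI2 x z + g x * g z * hI2 y w + g y * g w * hI2 z x
      - g x * g z * hI2 w y
      - g y * hF x z w + g w * hF y x z - g z * hF y x w - g w * hF y z x
      + g x * hF y z w + g z * hF y w x + g y * hF z x w + g w * hF z y x
      - g x * hF z y w - g y * hF z w x + g x * hF z w y - g z * hF w y x
      - f z * g w * hcen x y + f w * g z * hcen x y
      - μ z * f (σ z) * g w * hcen x y + μ w * f (σ w) * g z * hcen x y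
      + f y * g w * hcen x z - μ w * f (σ w) * g y * hcen x z
      - f y * g z * hcen x w + f z * g y * hcen x w
      - μ x * f (σ x) * g w * hcen y z + μ w * f (σ w) * g x * hcen y z
      - f z * g x * hcen y w + μ x * f (σ x) * g z * hcen y w
  -- existence of a pair with W ≠ 0
  have hWex : ∃ p q : S, 2 * g p * g q - g (p * q) ≠ 0 := by
    by_contra hW
    push_neg at hW
    have hWall : ∀ p q : S, g (p * q) = 2 * g p * g q := by
      intro p q; linear_combination -hW p q
    have hstarI : ∀ x y z : S, f (x * y * z) = f (x * y) * g z + f (x * z) * g y := by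
      intro x y z
      linear_combination hstar x y z + f x * hWall y z
    have hI1 : ∀ x y w : S, f (x * y) * g w = f (x * w) * g y := by
      intro x y w
      have A1 := hstarI x y (z0 * w)
      have A2 := hstarI x z0 w
      have B1 := hstarI x (y * z0) w
      have B2 := hstarI x y z0
      rw [mul_assoc x z0 w] at A2
      rw [mul_assoc x y z0] at B2
      have e : x * y * (z0 * w) = x * (y * z0) * w := by rw [← mul_assoc, mul_assoc x y z0]
      rw [e] at A1
      have key : g z0 * (f (x * y) * g w - f (x * w) * g y) = 0 := by
        linear_combination -A1 + B1 - g y * A2 + g w * B2 - f (x * y) * hWall z0 w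
          + f (x * w) * hWall y z0
      have h2 := (mul_eq_zero.mp key).resolve_left hz0
      exact sub_eq_zero.mp h2
    have CI1 : ∀ x y : S, f (x * z0) * g y + μ y * f (σ y * z0) * g x
        = 2 * f x * g y * g z0 := by
      intro x y
      linear_combination g z0 * hfg x y - hI1 x y z0 - μ y * hI1 (σ y) x z0
    by_cases hall : ∀ y, μ y * f (σ y * z0) = 0
    · have hfz : ∀ u, f (u * z0) = 0 := by
        intro u
        obtain ⟨s, hs⟩ := hσbij.2 u
        have h := hall s
        rw [hs] at h
        exact (mul_eq_zero.mp h).resolve_left (hμ0 s)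
      have hf0 : f x0 = 0 := by
        have key : f x0 * (2 * g z0 * g z0) = 0 := by
          linear_combination -CI1 x0 z0 + g z0 * hfz x0 + g x0 * hall z0
        exact (mul_eq_zero.mp key).resolve_right
          (mul_ne_zero (mul_ne_zero two_ne_zero hz0) hz0)
      exact hx0 hf0
    · push_neg at hall
      obtain ⟨y1, hy1⟩ := hall
      have c2 : ∀ x y : S, f (x * y * z0) = 2 * f (x * z0) * g y := by
        intro x y
        have h1 := hI1 x (y * z0) z0
        rw [← mul_assoc] at h1
        have h2 : f (x * y * z0) * g z0 = 2 * f (x * z0) * g y * g z0 := by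
          linear_combination h1 + f (x * z0) * hWall y z0
        exact mul_right_cancel₀ hz0 h2
      have key3 : μ y1 * f (σ y1 * z0) * (g z0 * g z0) = 0 := by
        have h1 := CI1 (z0 * z0) y1
        linear_combination (h1 - g y1 * c2 z0 z0 - (μ y1 * f (σ y1 * z0)) * hWall z0 z0
          + 2 * g y1 * hI1 z0 z0 z0) / 2
      exact hy1 ((mul_eq_zero.mp key3).resolve_right (mul_ne_zero hz0 hz0))
  -- conclusion
  obtain ⟨p, q, hpq⟩ := hWex
  have hΨ : ∀ x : S, (f x + μ x * f (σ x)) * g z0 - (f z0 + μ z0 * f (σ z0)) * g x = 0 := by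
    intro x
    have hg1 := hGOAL p q x z0
    have hu := hU x z0
    have key : (2 * g p * g q - g (p * q)) *
        (((f x + μ x * f (σ x)) * g z0 - (f z0 + μ z0 * f (σ z0)) * g x) *
         ((f x + μ x * f (σ x)) * g z0 - (f z0 + μ z0 * f (σ z0)) * g x)) = 0 := by
      linear_combination ((f x + μ x * f (σ x)) * g z0 - (f z0 + μ z0 * f (σ z0)) * g x) * hg1
        + ((f p + μ p * f (σ p)) * g q - (f q + μ q * f (σ q)) * g p) * hu
    exact mul_self_eq_zero.mp ((mul_eq_zero.mp key).resolve_left hpq)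
  refine ⟨(f z0 + μ z0 * f (σ z0)) / (2 * g z0), fun x => ?_⟩
  have h := hΨ x
  have h20 : (2 : ℂ) ≠ 0 := two_ne_zero
  field_simp
  linear_combination h
end

section
/- Let f, g : S → ℂ satisfy f(xy) + μ(y)f(σ(y)x) = 2f(x)g(y) for all x, y ∈ S, with f ≠ 0 and g ≠ 0. Then f and g are abelian; in particular f and g are central. -/
/-- If (f, g) solves the μ-σ-Wilson equation with f ≠ 0 and g ≠ 0, then
f and g are abelian (in particular central). -/
theorem stmt_14 {S : Type*} [Semigroup S] (σ : S → S) (hσbij : Function.Bijective σ)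
    (hσ : ∀ x y : S, σ (x * y) = σ x * σ y)
    (μ : S → ℂ) (hμ : ∀ x y : S, μ (x * y) = μ x * μ y)
    (hμσ : ∀ x : S, μ (x * σ x) = 1)
    (f g : S → ℂ)
    (hfg : ∀ x y : S, f (x * y) + μ y * f (σ y * x) = 2 * f x * g y)
    (hf : f ≠ 0) (hg : g ≠ 0) :
    ((∀ x y : S, f (x * y) = f (y * x)) ∧
      (∀ x y z : S, f (x * (y * z)) = f (x * (z * y)))) ∧
    ((∀ x y : S, g (x * y) = g (y * x)) ∧
      (∀ x y z : S, g (x * (y * z)) = g (x * (z * y)))) := by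
  have hμinv : ∀ x : S, μ x * μ (σ x) = 1 := by
    intro x; have h := hμσ x; rwa [hμ] at h
  have hμne : ∀ x : S, μ x ≠ 0 := fun x => left_ne_zero_of_mul_eq_one (hμinv x)
  obtain ⟨x2, hx2⟩ : ∃ x, f x ≠ 0 := by
    by_contra h; push_neg at h; exact hf (funext fun x => h x)
  obtain ⟨yg, hyg⟩ : ∃ x, g x ≠ 0 := by
    by_contra h; push_neg at h; exact hg (funext fun x => h x)
  have hstar : ∀ x y z : S, f (x * (y * z)) =
      f x * g (y * z) + f (x * z) * g y + f (x * y) * g z - 2 * f x * g y * g z := by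
    intro x y z
    have E1 := hfg x (y * z)
    rw [hσ, hμ, mul_assoc (σ y) (σ z) x] at E1
    have E2 := hfg (σ z * x) y
    rw [mul_assoc (σ z) x y] at E2
    have E3 := hfg x z
    have E4 := hfg (x * y) z
    rw [mul_assoc x y z] at E4
    linear_combination (E1 - μ z * E2 + E4 - 2 * g y * E3) / 2
  have hC : ∀ x y z w : S, (f (x*w) - f x * g w) * (g (y*z) - g y * g z)
      = (f (x*y) - f x * g y) * (g (z*w) - g z * g w) := by
    intro x y z w
    have I1 := hstar x (y*z) w
    rw [mul_assoc y z w] at I1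
    have I2 := hstar x y (z*w)
    have I3 := hstar x y z
    have I4 := hstar x z w
    linear_combination I2 - I1 - g w * I3 + g y * I4
  have hFmult : (∀ x y : S, f (x*y) = f x * g y) → ∀ y z : S, g (y*z) = g y * g z := by
    intro h y z
    have e2 := h (x2 * y) z
    rw [mul_assoc x2 y z, h x2 (y*z), h x2 y] at e2
    exact mul_left_cancel₀ hx2 (by rw [← mul_assoc]; exact e2)
  have gc : ∀ x y : S, g (x * y) = g (y * x) := by
    by_cases hF : ∀ x y : S, f (x*y) = f x * g y
    · intro x y; rw [hFmult hF, hFmult hF, mul_comm]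
    · push_neg at hF
      obtain ⟨x1, w1, hx1⟩ := hF
      have hne : f (x1*w1) - f x1 * g w1 ≠ 0 := sub_ne_zero_of_ne hx1
      intro x y
      have a1 := hC x1 w1 y w1
      have b1 := hC x1 x y w1
      have b2 := hC x1 y x w1
      have c1 := hC x1 x w1 y
      have key : (f (x1*w1) - f x1 * g w1) * ((f (x1*w1) - f x1 * g w1) * (g (x*y) - g x * g y))
          = (f (x1*w1) - f x1 * g w1) * ((f (x1*w1) - f x1 * g w1) * (g (y*x) - g y * g x)) := by
        linear_combination (f (x1*w1) - f x1 * g w1) * (b1 - b2 - c1) - (f (x1*x) - f x1 * g x) * a1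
      have key2 := mul_left_cancel₀ hne (mul_left_cancel₀ hne key)
      linear_combination key2
  have fab : ∀ x y z : S, f (x*(y*z)) = f (x*(z*y)) := by
    intro x y z
    linear_combination hstar x y z - hstar x z y + f x * gc y z
  by_cases hφ : ∀ y z : S, g (y*z) = g y * g z
  · -- g multiplicative
    have gab : ∀ x y z : S, g (x*(y*z)) = g (x*(z*y)) := by
      intro x y z
      rw [hφ x (y*z), hφ y z, hφ x (z*y), hφ z y]; ring
    have fc : ∀ x y : S, f (x*y) = f (y*x) := by
      by_cases hF : ∀ x y : S, f (x*y) = f x * g y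
      · -- case A
        have hT : ∀ x y : S, μ y * f (σ y) * g x = f x * g y := by
          intro x y
          have e := hfg x y
          rw [hF x y, hF (σ y) x] at e
          linear_combination e
        have hgx2 : g x2 ≠ 0 := by
          intro h0
          have e := hT x2 yg
          rw [h0, mul_zero] at e
          rcases mul_eq_zero.mp e.symm with h | h
          · exact hx2 h
          · exact hyg h
        intro x y
        rw [hF x y, hF y x]
        apply mul_right_cancel₀ hgx2
        have e1 := hT x y
        have e2 := hT x2 y
        have e3 := hT y x
        have e4 := hT x2 x
        linear_combination (-(g x2)) * e1 + g x * e2 + g x2 * e3 - g y * e4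
      · -- case B1
        push_neg at hF
        obtain ⟨x1, u1, hx1⟩ := hF
        have hF11 : f (x1*u1) - f x1 * g u1 ≠ 0 := sub_ne_zero_of_ne hx1
        have hii : ∀ x y z : S, f (x*(y*z)) - f (x*y) * g z = g y * (f (x*z) - f x * g z) := by
          intro x y z
          linear_combination hstar x y z + f x * hφ y z
        have hiii : ∀ x u y : S, μ y * (f (σ y * (x*u)) - f (σ y * x) * g u)
            = (f (x*u) - f x * g u) * g y := by
          intro x u y
          have e1 := hfg (x*u) y
          rw [mul_assoc x u y] at e1
          have e2 := hfg x y
          linear_combination e1 - g u * e2 - hstar x u y - f x * hφ u y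
        have hQ : ∀ x y u : S, μ y * g x * (f (σ y * u) - f (σ y) * g u)
            = (f (x*u) - f x * g u) * g y := by
          intro x y u
          have e := hiii x u y
          have e2 := hii (σ y) x u
          linear_combination e - μ y * e2
        have hgx1 : g x1 ≠ 0 := by
          intro h0
          have e := hQ x1 yg u1
          rw [h0] at e
          have e' : (f (x1*u1) - f x1 * g u1) * g yg = 0 := by linear_combination -e
          rcases mul_eq_zero.mp e' with h | h
          · exact hF11 h
          · exact hyg h
        -- T' u := μ yg * (f (σ yg * u) - f (σ yg) * g u)
        have hFt : ∀ x u : S, (f (x*u) - f x * g u) * g yg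
            = g x * (μ yg * (f (σ yg * u) - f (σ yg) * g u)) := by
          intro x u
          linear_combination - hQ x yg u
        have hT'u1 : μ yg * (f (σ yg * u1) - f (σ yg) * g u1) ≠ 0 := by
          intro h0
          have e := hFt x1 u1
          rw [h0, mul_zero] at e
          rcases mul_eq_zero.mp e with h | h
          · exact hF11 h
          · exact hyg h
        have hμg : ∀ y : S, μ y * g (σ y) = g y := by
          intro y
          have e2 := hFt (σ y) u1
          have e := hQ x1 y u1
          have e3 := hFt x1 u1
          have key : (g x1 * (μ yg * (f (σ yg * u1) - f (σ yg) * g u1))) * (μ y * g (σ y))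
              = (g x1 * (μ yg * (f (σ yg * u1) - f (σ yg) * g u1))) * g y := by
            linear_combination (-(μ y * g x1)) * e2 + g yg * e + g y * e3
          exact mul_left_cancel₀ (mul_ne_zero hgx1 hT'u1) key
        have hR : ∀ x y : S, g x * (μ yg * (f (σ yg * y) - f (σ yg) * g y)
              + μ y * f (σ y) * g yg)
            = g y * (f x * g yg - μ yg * (f (σ yg * x) - f (σ yg) * g x)) := by
          intro x y
          linear_combination g yg * hfg x y - hFt x y - μ y * hFt (σ y) x
            - (μ yg * (f (σ yg * x) - f (σ yg) * g x)) * hμg y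
        have hq : ∀ y : S, (μ yg * (f (σ yg * y) - f (σ yg) * g y) + μ y * f (σ y) * g yg) * g x1
            = (f x1 * g yg - μ yg * (f (σ yg * x1) - f (σ yg) * g x1)) * g y := by
          intro y
          linear_combination hR x1 y
        have hfτ : ∀ x : S, g x1 * (f x * g yg - μ yg * (f (σ yg * x) - f (σ yg) * g x))
            = (f x1 * g yg - μ yg * (f (σ yg * x1) - f (σ yg) * g x1)) * g x := by
          intro x
          have key : g yg * (g x1 * (f x * g yg - μ yg * (f (σ yg * x) - f (σ yg) * g x)))
              = g yg * ((f x1 * g yg - μ yg * (f (σ yg * x1) - f (σ yg) * g x1)) * g x) := by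
            linear_combination g x * hq yg - g x1 * hR x yg
          exact mul_left_cancel₀ hyg key
        intro x y
        apply mul_left_cancel₀ (mul_ne_zero hgx1 hyg)
        linear_combination g x1 * hFt x y - g x1 * hFt y x + g y * hfτ x - g x * hfτ y
    exact ⟨⟨fc, fab⟩, gc, gab⟩
  · -- branch 2 : g not multiplicative
    push_neg at hφ
    obtain ⟨y0, z0, hy0z0⟩ := hφ
    have hFne : ¬ ∀ x y : S, f (x*y) = f x * g y := fun h => hy0z0 (hFmult h y0 z0)
    push_neg at hFne
    obtain ⟨x1, u1, hx1u1⟩ := hFne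
    have hc0 : g (y0*z0) - g y0 * g z0 ≠ 0 := sub_ne_zero_of_ne hy0z0
    have hF11 : f (x1*u1) - f x1 * g u1 ≠ 0 := sub_ne_zero_of_ne hx1u1
    -- notation: B w = g (z0*w) - g z0 * g w ; A x = f (x*y0) - f x * g y0 ; c0 as above
    -- hC x y0 z0 w : F(x,w) * c0 = A x * B w
    have hbu1 : g (z0*u1) - g z0 * g u1 ≠ 0 := by
      intro h0
      have e := hC x1 y0 z0 u1
      rw [h0, mul_zero] at e
      exact (mul_ne_zero hF11 hc0) e
    have hAx1 : f (x1*y0) - f x1 * g y0 ≠ 0 := by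
      intro h0
      have e := hC x1 y0 z0 u1
      rw [h0, zero_mul] at e
      exact (mul_ne_zero hF11 hc0) e
    have hD : ∀ y z w : S, (g (z0*w) - g z0 * g w) * (g (y*z) - g y * g z)
        = (g (z0*y) - g z0 * g y) * (g (z*w) - g z * g w) := by
      intro y z w
      have key : (f (x1*y0) - f x1 * g y0) * ((g (z0*w) - g z0 * g w) * (g (y*z) - g y * g z))
          = (f (x1*y0) - f x1 * g y0) * ((g (z0*y) - g z0 * g y) * (g (z*w) - g z * g w)) := by
        linear_combination (g (y0*z0) - g y0 * g z0) * hC x1 y z w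
          - (g (y*z) - g y * g z) * hC x1 y0 z0 w
          + (g (z*w) - g z * g w) * hC x1 y0 z0 y
      exact mul_left_cancel₀ hAx1 key
    have hbz0 : g (z0*z0) - g z0 * g z0 ≠ 0 := by
      intro h0
      have e := hD z0 u1 u1
      rw [h0, zero_mul] at e
      rcases mul_eq_zero.mp e with h | h
      · exact hbu1 h
      · exact hbu1 h
    -- hg2 : g (z*w) * B z0 = g z * g w * B z0 + B z * B w
    have hg2 : ∀ z w : S, g (z*w) * (g (z0*z0) - g z0 * g z0)
        = g z * g w * (g (z0*z0) - g z0 * g z0)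
          + (g (z0*z) - g z0 * g z) * (g (z0*w) - g z0 * g w) := by
      intro z w
      linear_combination - hD z0 z w
    -- hG : g x * B y * B z + B x * B (y*z) = B x * B y * g z + B (x*y) * B z
    have hG : ∀ x y z : S,
        g x * (g (z0*y) - g z0 * g y) * (g (z0*z) - g z0 * g z)
          + (g (z0*x) - g z0 * g x) * (g (z0*(y*z)) - g z0 * g (y*z))
        = (g (z0*x) - g z0 * g x) * (g (z0*y) - g z0 * g y) * g z
          + (g (z0*(x*y)) - g z0 * g (x*y)) * (g (z0*z) - g z0 * g z) := by
      intro x y z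
      have e1 := hg2 x (y*z)
      have e2 := hg2 (x*y) z
      rw [mul_assoc x y z] at e2
      have e3 := hg2 y z
      have e4 := hg2 x y
      linear_combination -e1 + e2 - g x * e3 + g z * e4
    -- hL : B (x*y) * B z0 = g x * B y * B z0 + B x * (B (y*z0) - B y * g z0)
    have hL : ∀ x y : S, (g (z0*(x*y)) - g z0 * g (x*y)) * (g (z0*z0) - g z0 * g z0)
        = g x * (g (z0*y) - g z0 * g y) * (g (z0*z0) - g z0 * g z0)
          + (g (z0*x) - g z0 * g x)
            * ((g (z0*(y*z0)) - g z0 * g (y*z0)) - (g (z0*y) - g z0 * g y) * g z0) := by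
      intro x y
      linear_combination -hG x y z0
    have hL' : ∀ y z : S, (g (z0*(y*z)) - g z0 * g (y*z)) * (g (z0*z0) - g z0 * g z0)
        = ((g (z0*(y*z0)) - g z0 * g (y*z0)) - (g (z0*y) - g z0 * g y) * g z0)
            * (g (z0*z) - g z0 * g z)
          + (g (z0*y) - g z0 * g y) * g z * (g (z0*z0) - g z0 * g z0) := by
      intro y z
      have key : (g (z0*u1) - g z0 * g u1) * ((g (z0*(y*z)) - g z0 * g (y*z)) * (g (z0*z0) - g z0 * g z0))
          = (g (z0*u1) - g z0 * g u1)
            * (((g (z0*(y*z0)) - g z0 * g (y*z0)) - (g (z0*y) - g z0 * g y) * g z0)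
                * (g (z0*z) - g z0 * g z)
              + (g (z0*y) - g z0 * g y) * g z * (g (z0*z0) - g z0 * g z0)) := by
        linear_combination (g (z0*z0) - g z0 * g z0) * hG u1 y z
          + (g (z0*z) - g z0 * g z) * hL u1 y
      exact mul_left_cancel₀ hbu1 key
    have hbc : ∀ y z : S, g (z0*(y*z)) - g z0 * g (y*z) = g (z0*(z*y)) - g z0 * g (z*y) := by
      intro y z
      have key : (g (z0*(y*z)) - g z0 * g (y*z)) * (g (z0*z0) - g z0 * g z0)
          = (g (z0*(z*y)) - g z0 * g (z*y)) * (g (z0*z0) - g z0 * g z0) := by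
        linear_combination hL y z - hL' z y
      exact mul_right_cancel₀ hbz0 key
    have gab : ∀ x y z : S, g (x*(y*z)) = g (x*(z*y)) := by
      intro x y z
      have key : g (x*(y*z)) * (g (z0*z0) - g z0 * g z0)
          = g (x*(z*y)) * (g (z0*z0) - g z0 * g z0) := by
        linear_combination hg2 x (y*z) - hg2 x (z*y)
          + (g x * (g (z0*z0) - g z0 * g z0)) * gc y z
          + (g (z0*x) - g z0 * g x) * hbc y z
      exact mul_right_cancel₀ hbz0 key
    have fc : ∀ x y : S, f (x*y) = f (y*x) := by
      by_cases hdep : ∀ y z : S, g y * (g (z0 * z) - g z0 * g z) = g z * (g (z0 * y) - g z0 * g y)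
      · -- dependent case : B proportional to g
        have hgu1 : g u1 ≠ 0 := by
          intro h0
          have e' : g yg * (g (z0 * u1) - g z0 * g u1) = 0 := by
            linear_combination hdep yg u1 + (g (z0 * yg) - g z0 * g yg) * h0
          rcases mul_eq_zero.mp e' with h | h
          · exact hyg h
          · exact hbu1 h
        have hk : ∀ x w : S, f (x*w) * g u1 * (g (y0*z0) - g y0 * g z0) = (f x * g u1 * (g (y0*z0) - g y0 * g z0) + (f (x * y0) - f x * g y0) * (g (z0 * u1) - g z0 * g u1)) * g w := by
          intro x w
          linear_combination g u1 * hC x y0 z0 w - (f (x * y0) - f x * g y0) * hdep w u1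
        have hWk : ∀ x y : S, (f x * g u1 * (g (y0*z0) - g y0 * g z0) + (f (x * y0) - f x * g y0) * (g (z0 * u1) - g z0 * g u1)) * g y + μ y * (f (σ y) * g u1 * (g (y0*z0) - g y0 * g z0) + (f ((σ y) * y0) - f (σ y) * g y0) * (g (z0 * u1) - g z0 * g u1)) * g x
            = 2 * f x * g y * g u1 * (g (y0*z0) - g y0 * g z0) := by
          intro x y
          linear_combination g u1 * (g (y0*z0) - g y0 * g z0) * hfg x y - hk x y - μ y * hk (σ y) x
        have hkτ : ∀ y : S, μ y * (f (σ y) * g u1 * (g (y0*z0) - g y0 * g z0) + (f ((σ y) * y0) - f (σ y) * g y0) * (g (z0 * u1) - g z0 * g u1)) * g u1 = (2 * f u1 * g u1 * (g (y0*z0) - g y0 * g z0) - (f u1 * g u1 * (g (y0*z0) - g y0 * g z0) + (f (u1 * y0) - f u1 * g y0) * (g (z0 * u1) - g z0 * g u1))) * g y := by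
          intro y
          linear_combination hWk u1 y
        have hgm : ∀ z w : S, g (z*w) * ((g (z0 * z0) - g z0 * g z0) * g u1 * g u1) = (((g (z0 * z0) - g z0 * g z0) * g u1 * g u1) + (g (z0 * u1) - g z0 * g u1) * (g (z0 * u1) - g z0 * g u1)) * (g z * g w) := by
          intro z w
          linear_combination g u1 * g u1 * hg2 z w - (g (z0 * w) - g z0 * g w) * g u1 * hdep z u1
            - (g (z0 * u1) - g z0 * g u1) * g z * hdep w u1
        have hkm : ∀ x y : S, (f (x*y) * g u1 * (g (y0*z0) - g y0 * g z0) + (f ((x*y) * y0) - f (x*y) * g y0) * (g (z0 * u1) - g z0 * g u1)) * g u1 * ((g (z0 * z0) - g z0 * g z0) * g u1 * g u1)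
            = (((g (z0 * z0) - g z0 * g z0) * g u1 * g u1) + (g (z0 * u1) - g z0 * g u1) * (g (z0 * u1) - g z0 * g u1)) * (f x * g u1 * (g (y0*z0) - g y0 * g z0) + (f (x * y0) - f x * g y0) * (g (z0 * u1) - g z0 * g u1)) * g y * g u1 := by
          intro x y
          have e1 := hk (x*y) u1
          rw [mul_assoc x y u1] at e1
          linear_combination ((g (z0 * z0) - g z0 * g z0) * g u1 * g u1) * hk x (y*u1) - ((g (z0 * z0) - g z0 * g z0) * g u1 * g u1) * e1 + (f x * g u1 * (g (y0*z0) - g y0 * g z0) + (f (x * y0) - f x * g y0) * (g (z0 * u1) - g z0 * g u1)) * hgm y u1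
        have h2f : ∀ x : S, 2 * f x * g u1 * g u1 * g u1 * (g (y0*z0) - g y0 * g z0)
            = (f x * g u1 * (g (y0*z0) - g y0 * g z0) + (f (x * y0) - f x * g y0) * (g (z0 * u1) - g z0 * g u1)) * g u1 * g u1 + (2 * f u1 * g u1 * (g (y0*z0) - g y0 * g z0) - (f u1 * g u1 * (g (y0*z0) - g y0 * g z0) + (f (u1 * y0) - f u1 * g y0) * (g (z0 * u1) - g z0 * g u1))) * g x * g u1 := by
          intro x
          linear_combination g x * hkτ u1 - g u1 * hWk x u1
        by_cases hTq : (2 * f u1 * g u1 * (g (y0*z0) - g y0 * g z0) - (f u1 * g u1 * (g (y0*z0) - g y0 * g z0) + (f (u1 * y0) - f u1 * g y0) * (g (z0 * u1) - g z0 * g u1))) = 0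
        · have hK0 : ∀ w : S, (f w * g u1 * (g (y0*z0) - g y0 * g z0) + (f (w * y0) - f w * g y0) * (g (z0 * u1) - g z0 * g u1)) = 0 := by
            intro w
            obtain ⟨v, rfl⟩ := hσbij.2 w
            have e := hkτ v
            rw [hTq] at e
            have e' : μ v * ((f (σ v) * g u1 * (g (y0*z0) - g y0 * g z0) + (f ((σ v) * y0) - f (σ v) * g y0) * (g (z0 * u1) - g z0 * g u1)) * g u1) = 0 := by linear_combination e
            rcases mul_eq_zero.mp e' with h | h
            · exact absurd h (hμne v)
            · rcases mul_eq_zero.mp h with h2 | h2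
              · exact h2
              · exact absurd h2 hgu1
          intro x y
          have e1 := hk x y
          have e2 := hk y x
          rw [hK0 x, zero_mul] at e1
          rw [hK0 y, zero_mul] at e2
          have hne : g u1 * (g (y0*z0) - g y0 * g z0) ≠ 0 := mul_ne_zero hgu1 hc0
          have q1 : f (x*y) = 0 := by
            have e' : f (x*y) * (g u1 * (g (y0*z0) - g y0 * g z0)) = 0 := by linear_combination e1
            rcases mul_eq_zero.mp e' with h | h
            · exact h
            · exact absurd h hne
          have q2 : f (y*x) = 0 := by
            have e' : f (y*x) * (g u1 * (g (y0*z0) - g y0 * g z0)) = 0 := by linear_combination e2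
            rcases mul_eq_zero.mp e' with h | h
            · exact h
            · exact absurd h hne
          rw [q1, q2]
        · by_cases hM : (((g (z0 * z0) - g z0 * g z0) * g u1 * g u1) + (g (z0 * u1) - g z0 * g u1) * (g (z0 * u1) - g z0 * g u1)) = 0
          · have hDD : ((g (z0 * z0) - g z0 * g z0) * g u1 * g u1) ≠ 0 := mul_ne_zero (mul_ne_zero hbz0 hgu1) hgu1
            have hfz : ∀ x y : S, f (x*y) = 0 := by
              intro x y
              have hK : (f (x*y) * g u1 * (g (y0*z0) - g y0 * g z0) + (f ((x*y) * y0) - f (x*y) * g y0) * (g (z0 * u1) - g z0 * g u1)) = 0 := by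
                have e := hkm x y
                rw [hM] at e
                have e' : (f (x*y) * g u1 * (g (y0*z0) - g y0 * g z0) + (f ((x*y) * y0) - f (x*y) * g y0) * (g (z0 * u1) - g z0 * g u1)) * (g u1 * ((g (z0 * z0) - g z0 * g z0) * g u1 * g u1)) = 0 := by linear_combination e
                rcases mul_eq_zero.mp e' with h | h
                · exact h
                · exact absurd h (mul_ne_zero hgu1 hDD)
              have hg0 : g (x*y) = 0 := by
                have e := hgm x y
                rw [hM] at e
                rcases mul_eq_zero.mp (by linear_combination e : g (x*y) * ((g (z0 * z0) - g z0 * g z0) * g u1 * g u1) = 0) with h | h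
                · exact h
                · exact absurd h hDD
              have e := h2f (x*y)
              rw [hK, hg0] at e
              have e' : f (x*y) * (2 * (g u1 * (g u1 * (g u1 * (g (y0*z0) - g y0 * g z0))))) = 0 := by
                linear_combination e
              rcases mul_eq_zero.mp e' with h | h
              · exact h
              · exact absurd h (mul_ne_zero two_ne_zero
                  (mul_ne_zero hgu1 (mul_ne_zero hgu1 (mul_ne_zero hgu1 hc0))))
            intro x y
            rw [hfz x y, hfz y x]
          · -- TQ ≠ 0, MM ≠ 0
            have hkσ : ∀ v : S, (f (σ v) * g u1 * (g (y0*z0) - g y0 * g z0) + (f ((σ v) * y0) - f (σ v) * g y0) * (g (z0 * u1) - g z0 * g u1)) * g u1 = (2 * f u1 * g u1 * (g (y0*z0) - g y0 * g z0) - (f u1 * g u1 * (g (y0*z0) - g y0 * g z0) + (f (u1 * y0) - f u1 * g y0) * (g (z0 * u1) - g z0 * g u1))) * g v * μ (σ v) := by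
              intro v
              linear_combination μ (σ v) * hkτ v - (f (σ v) * g u1 * (g (y0*z0) - g y0 * g z0) + (f ((σ v) * y0) - f (σ v) * g y0) * (g (z0 * u1) - g z0 * g u1)) * g u1 * hμinv v
            have hgσ : ∀ v : S, μ (σ v) * g v = g (σ v) := by
              intro v
              have e := hkm (σ u1) (σ v)
              have e1 := hkσ (u1*v)
              rw [hσ u1 v, hμ (σ u1) (σ v)] at e1
              have e2 := hkσ u1
              have e3 := hgm u1 v
              have key : ((((g (z0 * z0) - g z0 * g z0) * g u1 * g u1) + (g (z0 * u1) - g z0 * g u1) * (g (z0 * u1) - g z0 * g u1)) * (2 * f u1 * g u1 * (g (y0*z0) - g y0 * g z0) - (f u1 * g u1 * (g (y0*z0) - g y0 * g z0) + (f (u1 * y0) - f u1 * g y0) * (g (z0 * u1) - g z0 * g u1))) * μ (σ u1) * g u1) * (μ (σ v) * g v)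
                  = ((((g (z0 * z0) - g z0 * g z0) * g u1 * g u1) + (g (z0 * u1) - g z0 * g u1) * (g (z0 * u1) - g z0 * g u1)) * (2 * f u1 * g u1 * (g (y0*z0) - g y0 * g z0) - (f u1 * g u1 * (g (y0*z0) - g y0 * g z0) + (f (u1 * y0) - f u1 * g y0) * (g (z0 * u1) - g z0 * g u1))) * μ (σ u1) * g u1) * g (σ v) := by
                linear_combination e - ((g (z0 * z0) - g z0 * g z0) * g u1 * g u1) * e1 - (2 * f u1 * g u1 * (g (y0*z0) - g y0 * g z0) - (f u1 * g u1 * (g (y0*z0) - g y0 * g z0) + (f (u1 * y0) - f u1 * g y0) * (g (z0 * u1) - g z0 * g u1))) * μ (σ u1) * μ (σ v) * e3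
                  + (((g (z0 * z0) - g z0 * g z0) * g u1 * g u1) + (g (z0 * u1) - g z0 * g u1) * (g (z0 * u1) - g z0 * g u1)) * g (σ v) * e2
              exact mul_left_cancel₀ (mul_ne_zero (mul_ne_zero (mul_ne_zero hM hTq)
                (hμne (σ u1))) hgu1) key
            have hKτg : ∀ w : S, (f w * g u1 * (g (y0*z0) - g y0 * g z0) + (f (w * y0) - f w * g y0) * (g (z0 * u1) - g z0 * g u1)) * g u1 = (2 * f u1 * g u1 * (g (y0*z0) - g y0 * g z0) - (f u1 * g u1 * (g (y0*z0) - g y0 * g z0) + (f (u1 * y0) - f u1 * g y0) * (g (z0 * u1) - g z0 * g u1))) * g w := by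
              intro w
              obtain ⟨v, rfl⟩ := hσbij.2 w
              linear_combination hkσ v + (2 * f u1 * g u1 * (g (y0*z0) - g y0 * g z0) - (f u1 * g u1 * (g (y0*z0) - g y0 * g z0) + (f (u1 * y0) - f u1 * g y0) * (g (z0 * u1) - g z0 * g u1))) * hgσ v
            intro x y
            have key : f (x*y) * (g u1 * g u1 * (g (y0*z0) - g y0 * g z0)) = f (y*x) * (g u1 * g u1 * (g (y0*z0) - g y0 * g z0)) := by
              linear_combination g u1 * hk x y - g u1 * hk y x + g y * hKτg x - g x * hKτg y
            exact mul_right_cancel₀ (mul_ne_zero (mul_ne_zero hgu1 hgu1) hc0) key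
      · -- independent case
        push_neg at hdep
        obtain ⟨y2, z2, hind⟩ := hdep
        have hΔ : g y2 * (g (z0 * z2) - g z0 * g z2) - g z2 * (g (z0 * y2) - g z0 * g y2) ≠ 0 := sub_ne_zero_of_ne hind
        have hH : ∀ x y : S, μ y * f (σ y) * g x * (g (y0*z0) - g y0 * g z0) + μ y * (f ((σ y) * y0) - f (σ y) * g y0) * (g (z0 * x) - g z0 * g x)
            = f x * g y * (g (y0*z0) - g y0 * g z0) - (f (x * y0) - f x * g y0) * (g (z0 * y) - g z0 * g y) := by
          intro x y
          linear_combination (g (y0*z0) - g y0 * g z0) * hfg x y - hC x y0 z0 y - μ y * hC (σ y) y0 z0 x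
        have hfx : ∀ x : S, f x * (g (y0*z0) - g y0 * g z0) * (g y2 * (g (z0 * z2) - g z0 * g z2) - g z2 * (g (z0 * y2) - g z0 * g y2))
            = (μ y2 * f (σ y2) * (g (y0*z0) - g y0 * g z0) * (g (z0 * z2) - g z0 * g z2) - μ z2 * f (σ z2) * (g (y0*z0) - g y0 * g z0) * (g (z0 * y2) - g z0 * g y2)) * g x
              + (μ y2 * (f ((σ y2) * y0) - f (σ y2) * g y0) * (g (z0 * z2) - g z0 * g z2) - μ z2 * (f ((σ z2) * y0) - f (σ z2) * g y0) * (g (z0 * y2) - g z0 * g y2)) * (g (z0 * x) - g z0 * g x) := by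
          intro x
          linear_combination (g (z0 * y2) - g z0 * g y2) * hH x z2 - (g (z0 * z2) - g z0 * g z2) * hH x y2
        intro x y
        have key : f (x*y) * ((g (y0*z0) - g y0 * g z0) * (g y2 * (g (z0 * z2) - g z0 * g z2) - g z2 * (g (z0 * y2) - g z0 * g y2)))
            = f (y*x) * ((g (y0*z0) - g y0 * g z0) * (g y2 * (g (z0 * z2) - g z0 * g z2) - g z2 * (g (z0 * y2) - g z0 * g y2))) := by
          linear_combination hfx (x*y) - hfx (y*x)
            + (μ y2 * f (σ y2) * (g (y0*z0) - g y0 * g z0) * (g (z0 * z2) - g z0 * g z2) - μ z2 * f (σ z2) * (g (y0*z0) - g y0 * g z0) * (g (z0 * y2) - g z0 * g y2)) * gc x y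
            + (μ y2 * (f ((σ y2) * y0) - f (σ y2) * g y0) * (g (z0 * z2) - g z0 * g z2) - μ z2 * (f ((σ z2) * y0) - f (σ z2) * g y0) * (g (z0 * y2) - g z0 * g y2)) * hbc x y
        exact mul_right_cancel₀ (mul_ne_zero hc0 hΔ) key
    exact ⟨⟨fc, fab⟩, gc, gab⟩
end

section
/- Let χ : S → ℂ be a non-zero multiplicative function and α, β ∈ ℂ constants such that χ* ≠ χ and, in case β ≠ 0, χ∘σ² = χ. Then the pair f := αχ + βχ*, g := (χ + χ*)/2 satisfies f(xy) + μ(y)f(σ(y)x) = 2f(x)g(y) for all x, y ∈ S. -/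
/-- If χ is a non-zero multiplicative function with χ* ≠ χ and, in case
β ≠ 0, χ∘σ² = χ, then f = αχ + βχ*, g = (χ + χ*)/2 solve the μ-σ-Wilson equation. -/
theorem stmt_16 {S : Type*} [Semigroup S] (σ : S → S) (hσbij : Function.Bijective σ)
    (hσ : ∀ x y : S, σ (x * y) = σ x * σ y)
    (μ : S → ℂ) (hμ : ∀ x y : S, μ (x * y) = μ x * μ y)
    (hμσ : ∀ x : S, μ (x * σ x) = 1)
    (χ : S → ℂ) (hχmul : ∀ x y : S, χ (x * y) = χ x * χ y) (hχ : χ ≠ 0)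
    (α β : ℂ)
    (hne : (fun x : S => μ x * χ (σ x)) ≠ χ)
    (hβ : β ≠ 0 → ∀ x : S, χ (σ (σ x)) = χ x) :
    ∀ x y : S,
      (α * χ (x * y) + β * (μ (x * y) * χ (σ (x * y)))) +
          μ y * (α * χ (σ y * x) + β * (μ (σ y * x) * χ (σ (σ y * x)))) =
        2 * (α * χ x + β * (μ x * χ (σ x))) *
          ((χ y + μ y * χ (σ y)) / 2) := by
  intro x y
  have h1 : μ y * μ (σ y) = 1 := by rw [← hμ]; exact hμσ y
  rcases eq_or_ne β 0 with hb | hb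
  · simp only [hb, zero_mul, add_zero, hχmul]
    ring
  · simp only [hσ, hμ, hχmul, hβ hb y]
    linear_combination β * μ x * χ y * χ (σ x) * h1
end
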